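/- Let d be a squarefree integer with d ≠ 1 and d ≡ 1 (mod 4), let K = ℚ(√d) and let O_K = ℤ[ω] be its ring of integers, where ω = (1+√d)/2, so that {1, ω} is a ℤ-basis of O_K. Let σ and τ be two distinct ring endomorphisms of O_K, let D : O_K → O_K be a (σ,τ)-derivation, and write D(ω) = c₀ + c₁ω with c₀, c₁ ∈ ℤ. Then D is inner if and only if d divides −c₀ + c₁·(d−1)/2 and d divides 2c₀ + c₁. -/

import Mathlib

open NumberField Polynomial

lemma aux_sq_ne (d : ℤ) (hsf : Squarefree d) (hd1 : d ≠ 1) (q : ℚ) : q^2 ≠ (d:ℚ) := by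
  intro h
  have hden : (q.den:ℚ) ≠ 0 := by exact_mod_cast q.den_nz
  have hnd : (q.num:ℚ) = q * (q.den:ℚ) := by
    have h2 := Rat.num_div_den q
    rw [div_eq_iff hden] at h2
    exact h2
  have hnum : (q.num:ℚ)^2 = (d:ℚ) * (q.den:ℚ)^2 := by
    rw [hnd, mul_pow, h]
  have hZ : q.num^2 = d * (q.den:ℤ)^2 := by exact_mod_cast hnum
  have hcop : Nat.Coprime (q.num.natAbs) q.den := q.reduced
  have hdvd : (q.den:ℤ)^2 ∣ q.num^2 := ⟨d, by linarith [hZ]⟩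
  have hdvdN : q.den^2 ∣ q.num.natAbs^2 := by
    have := Int.natAbs_dvd_natAbs.mpr hdvd
    simpa [Int.natAbs_pow] using this
  have hden1 : q.den = 1 := by
    have h1 : q.den^2 = 1 := Nat.Coprime.eq_one_of_dvd (Nat.Coprime.pow 2 2 hcop.symm) hdvdN
    nlinarith [h1]
  have hd : d = q.num^2 := by rw [hZ, hden1]; simp
  have : IsUnit q.num := hsf q.num ⟨1, by rw [hd]; ring⟩
  rcases Int.isUnit_iff.mp this with h1 | h1 <;> rw [h1] at hd <;> omega
open NumberField Polynomial

lemma aux_span (K : Type*) [Field K] [NumberField K] (hdeg : Module.finrank ℚ K = 2) (s : K)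
    (hsQ : ∀ q : ℚ, (q:K) ≠ s) (x : K) : ∃ u v : ℚ, x = (u:K) + (v:K) * s := by
  have li : LinearIndependent ℚ ![(1:K), s] := by
    rw [LinearIndependent.pair_iff' (one_ne_zero)]
    intro a ha
    exact hsQ a (by simpa [Rat.smul_one_eq_cast] using ha)
  have hsp := li.span_eq_top_of_card_eq_finrank (by simp [hdeg])
  have hx : x ∈ Submodule.span ℚ ({(1:K), s} : Set K) := by
    have : (Set.range ![(1:K), s]) = ({(1:K), s} : Set K) := by simp [Set.pair_comm]
    rw [← this, hsp]; trivial
  obtain ⟨u, v, huv⟩ := Submodule.mem_span_pair.mp hx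
  refine ⟨u, v, ?_⟩
  rw [← huv]
  simp [Rat.smul_def]
open NumberField Polynomial

lemma aux_coeffs (d : ℤ) (K : Type*) [Field K] [NumberField K] (s : K) (hs : s^2 = (d:K))
    (hsQ : ∀ q : ℚ, (q:K) ≠ s) (u v : ℚ) (hv : v ≠ 0) (x : 𝓞 K)
    (hx : (x:K) = (u:K) + (v:K) * s) :
    ∃ g n : ℤ, (g:ℚ) = 2*u ∧ (n:ℚ) = u^2 - (d:ℚ)*v^2 := by
  set P : ℚ[X] := X^2 + C (-(2*u)) * X + C (u^2 - (d:ℚ)*v^2) with hP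
  have hint : IsIntegral ℤ (x:K) := RingOfIntegers.isIntegral_coe x
  have hPmonic : P.Monic := by
    have : (C (-(2*u)) * X + C (u^2 - (d:ℚ)*v^2)).degree < 2 := by
      apply lt_of_le_of_lt (Polynomial.degree_linear_le)
      norm_num
    simpa [hP, add_assoc] using Polynomial.monic_X_pow_add this
  have hdK : (((d:ℚ)):K) = s^2 := by exact_mod_cast hs.symm
  have hroot : Polynomial.aeval (x:K) P = 0 := by
    simp [hP]
    rw [hx]
    push_cast
    linear_combination ((v:ℚ):K)^2 * hs
  have hdvd : minpoly ℚ (x:K) ∣ P := minpoly.dvd ℚ _ hroot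
  have hPdeg : P.natDegree = 2 := by rw [hP]; compute_degree!
  have hnotmem : (x:K) ∉ (algebraMap ℚ K).range := by
    rintro ⟨q, hq⟩
    apply hsQ ((q - u)/v)
    have hvK : (v:K) ≠ 0 := by exact_mod_cast hv
    push_cast
    rw [div_eq_iff hvK]
    have : (q:K) = (u:K) + (v:K)*s := by rw [← hx, ← hq]; rfl
    linear_combination this
  have hmdeg : (minpoly ℚ (x:K)).natDegree = 2 := by
    have h1 : 2 ≤ (minpoly ℚ (x:K)).natDegree :=
      (minpoly.two_le_natDegree_iff (hint.tower_top)).mpr hnotmem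
    have h2 : (minpoly ℚ (x:K)).natDegree ≤ 2 :=
      hPdeg ▸ Polynomial.natDegree_le_of_dvd hdvd hPmonic.ne_zero
    omega
  have hPeq : minpoly ℚ (x:K) = P := by
    apply Polynomial.eq_of_dvd_of_natDegree_le_of_leadingCoeff hdvd (by omega)
    rw [(minpoly.monic (hint.tower_top)).leadingCoeff, hPmonic.leadingCoeff]
  have hmap : minpoly ℚ (x:K) = (minpoly ℤ (x:K)).map (algebraMap ℤ ℚ) :=
    minpoly.isIntegrallyClosed_eq_field_fractions' ℚ hint
  have key1 : ∀ a b : ℚ, (X^2 + C a * X + C b : ℚ[X]).coeff 1 = a := by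
    intros a b; simp [coeff_X_pow]
  have key0 : ∀ a b : ℚ, (X^2 + C a * X + C b : ℚ[X]).coeff 0 = b := by
    intros a b; simp [coeff_X_pow]
  have hmP : (minpoly ℤ (x:K)).map (algebraMap ℤ ℚ) = P := hmap ▸ hPeq
  rw [hP] at hmP
  have hco1 : ((minpoly ℤ (x:K)).coeff 1 : ℚ) = -(2*u) := by
    have h := congrArg (fun p => p.coeff 1) hmP
    simp only [Polynomial.coeff_map, key1] at h
    simpa using h
  have hco0 : ((minpoly ℤ (x:K)).coeff 0 : ℚ) = u^2 - (d:ℚ)*v^2 := by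
    have h := congrArg (fun p => p.coeff 0) hmP
    simp only [Polynomial.coeff_map, key0] at h
    simpa using h
  exact ⟨-((minpoly ℤ (x:K)).coeff 1), (minpoly ℤ (x:K)).coeff 0,
    by push_cast; linarith [hco1], hco0⟩
open NumberField

lemma aux_parity (d g h n : ℤ) (hmod : d % 4 = 1) (hrel : 4*n = g^2 - d*h^2) :
    Even (g - h) := by
  obtain ⟨m, hm⟩ : ∃ m, d = 4*m+1 := ⟨d/4, by omega⟩
  subst hm
  rcases Int.even_or_odd g with ⟨p, hp⟩ | ⟨p, hp⟩ <;>
    rcases Int.even_or_odd h with ⟨q, hq⟩ | ⟨q, hq⟩ <;> subst hp hq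
  · exact ⟨p - q, by ring⟩
  · exfalso
    have key : 4*(n - p*p + 4*m*q*q + 4*m*q + m + q*q + q) = -1 := by linear_combination hrel
    have : (4:ℤ) ∣ -1 := ⟨_, key.symm⟩
    norm_num at this
  · exfalso
    have key : 4*(n - p*p - p + 4*m*q*q + q*q) = 1 := by linear_combination hrel
    have : (4:ℤ) ∣ 1 := ⟨_, key.symm⟩
    norm_num at this
  · exact ⟨p - q, by ring⟩


lemma aux_decomp (d : ℤ) (hsf : Squarefree d) (hd1 : d ≠ 1) (hmod : d % 4 = 1)
    (K : Type*) [Field K] [NumberField K] (hdeg : Module.finrank ℚ K = 2)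
    (s : K) (hs : s^2 = (d:K)) (hsQ : ∀ q : ℚ, (q:K) ≠ s) (x : 𝓞 K) :
    ∃ a b : ℤ, (x:K) = (a:K) + (b:K) * ((1+s)/2) := by
  obtain ⟨u, v, huv⟩ := aux_span K hdeg s hsQ (x:K)
  by_cases hv : v = 0
  · have hxu : (x:K) = ((u:ℚ):K) := by rw [huv, hv]; push_cast; ring
    have hint : IsIntegral ℤ (x:K) := RingOfIntegers.isIntegral_coe x
    rw [hxu] at hint
    have hintu : IsIntegral ℤ (u:ℚ) := by
      have hinj : Function.Injective (algebraMap ℚ K) := (algebraMap ℚ K).injective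
      exact (isIntegral_algebraMap_iff hinj).mp (by exact_mod_cast hint)
    obtain ⟨a, ha⟩ := IsIntegrallyClosed.isIntegral_iff.mp hintu
    refine ⟨a, 0, ?_⟩
    rw [hxu]
    have : (a:ℚ) = u := ha
    push_cast [← this]
    ring
  · obtain ⟨g, n, hg, hn⟩ := aux_coeffs d K s hs hsQ u v hv x huv
    obtain ⟨w, hwdef⟩ : ∃ w : ℚ, w = 2*v := ⟨_, rfl⟩
    have hw : (d:ℚ) * w^2 = ((g^2 - 4*n : ℤ):ℚ) := by
      rw [hwdef]
      push_cast
      linear_combination 4*hn - ((g:ℚ) + 2*u) * hg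
    have hden : (w.den:ℚ) ≠ 0 := by exact_mod_cast w.den_nz
    have hnd : (w.num:ℚ) = w * (w.den:ℚ) := by
      have h2 := Rat.num_div_den w
      rw [div_eq_iff hden] at h2
      exact h2
    have hZ : d * w.num^2 = (g^2 - 4*n) * (w.den:ℤ)^2 := by
      have hQ : (d:ℚ) * (w.num:ℚ)^2 = ((g^2 - 4*n : ℤ):ℚ) * (w.den:ℚ)^2 := by
        linear_combination ((w.den:ℚ))^2 * hw + (d:ℚ)*((w.num:ℚ) + w*(w.den:ℚ))*hnd
      exact_mod_cast hQ
    have hcop : IsCoprime (w.den:ℤ) w.num := by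
      rw [Int.isCoprime_iff_gcd_eq_one, Int.gcd, Int.natAbs_natCast, Nat.coprime_comm.mp]
      exact w.reduced
    have hdvd : ((w.den:ℤ))^2 ∣ d := by
      apply (hcop.pow (m := 2) (n := 2)).dvd_of_dvd_mul_right
      exact ⟨g^2 - 4*n, by linarith [hZ]⟩
    have hden1 : w.den = 1 := by
      have : IsUnit ((w.den:ℤ)) := hsf _ (by rwa [← pow_two])
      rcases Int.isUnit_iff.mp this with h1 | h1 <;> omega
    have hh : ((w.num:ℚ)) = 2*v := by
      rw [hnd, hden1, hwdef]; push_cast; ring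
    set h := w.num with hhdef
    have hrel : 4*n = g^2 - d*h^2 := by
      have hQ : ((4*n:ℤ):ℚ) = ((g^2 - d*h^2:ℤ):ℚ) := by
        push_cast
        rw [hh]
        linear_combination 4*hn - ((g:ℚ)+2*u)*hg
      exact_mod_cast hQ
    obtain ⟨a, ha⟩ := aux_parity d g h n hmod hrel
    refine ⟨a, h, ?_⟩
    have hgK : ((g:ℤ):K) = 2*((u:ℚ):K) := by exact_mod_cast congrArg (fun q : ℚ => (q:K)) hg
    have hhK : ((h:ℤ):K) = 2*((v:ℚ):K) := by exact_mod_cast congrArg (fun q : ℚ => (q:K)) hh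
    have haK : ((g:ℤ):K) - ((h:ℤ):K) = 2*((a:ℤ):K) := by
      have hc : ((g - h : ℤ):K) = ((a + a : ℤ):K) := by exact_mod_cast congrArg (fun z : ℤ => (z:K)) ha
      push_cast at hc
      linear_combination hc
    rw [huv]
    field_simp
    linear_combination (-1:K)*hgK - s*hhK + haK

/-- Let `d` be a squarefree integer, `d ≠ 1`, `d ≡ 1 (mod 4)`, let
`K = ℚ(√d)` and let `O_K = ℤ[ω]` be its ring of integers, where `ω = (1+√d)/2` (so `{1, ω}` is a
`ℤ`-basis of `O_K`).  Let `σ`, `τ` be two distinct ring endomorphisms of `O_K`, `D` a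
`(σ,τ)`-derivation, and write `D ω = c₀ + c₁ ω`.  Then `D` is inner if and only if
`d ∣ -c₀ + c₁ * (d-1)/2` and `d ∣ 2c₀ + c₁`. -/
theorem stmt8 (d : ℤ) (hsf : Squarefree d) (hd1 : d ≠ 1) (hmod : d % 4 = 1)
    (K : Type*) [Field K] [NumberField K]
    (hdeg : Module.finrank ℚ K = 2) (s : K) (hs : s ^ 2 = (d : K))
    (ω : 𝓞 K) (hω : (ω : K) = (1 + s) / 2)
    (σ τ : 𝓞 K →+* 𝓞 K) (hστ : σ ≠ τ)
    (D : 𝓞 K →ₗ[ℤ] 𝓞 K)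
    (hD : ∀ x y : 𝓞 K, D (x * y) = D x * τ y + σ x * D y)
    (c₀ c₁ : ℤ) (hc : D ω = (c₀ : 𝓞 K) + (c₁ : 𝓞 K) * ω) :
    (∃ β : 𝓞 K, ∀ x : 𝓞 K, D x = β * (τ x - σ x)) ↔
      (d ∣ (-c₀ + c₁ * ((d - 1) / 2)) ∧ d ∣ (2 * c₀ + c₁)) := by
  obtain ⟨m, hm⟩ : ∃ m, d = 4*m+1 := ⟨d/4, by omega⟩
  have hsQ : ∀ q : ℚ, (q:K) ≠ s := by
    intro q hq
    apply aux_sq_ne d hsf hd1 q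
    have h2 : ((q^2 : ℚ) : K) = (((d:ℚ)):K) := by push_cast; rw [hq, hs]
    exact_mod_cast h2
  -- decomposition in 𝓞 K
  have coeK : ∀ z : ℤ, (((z:ℤ) : 𝓞 K) : K) = (z : K) := fun z =>
    map_intCast (algebraMap (𝓞 K) K) z
  have decomp : ∀ x : 𝓞 K, ∃ a b : ℤ, x = (a : 𝓞 K) + (b : 𝓞 K) * ω := by
    intro x
    obtain ⟨a, b, hab⟩ := aux_decomp d hsf hd1 hmod K hdeg s hs hsQ x
    refine ⟨a, b, RingOfIntegers.ext ?_⟩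
    simp only [map_add, map_mul, map_intCast, ← RingOfIntegers.coe_eq_algebraMap]
    rw [hω, hab]
  -- coordinate uniqueness
  have uniq : ∀ p q p' q' : ℤ, (p : 𝓞 K) + (q : 𝓞 K) * ω = (p' : 𝓞 K) + (q' : 𝓞 K) * ω →
      p = p' ∧ q = q' := by
    intro p q p' q' hEq
    have hK : (p:K) + (q:K) * ((1+s)/2) = (p':K) + (q':K) * ((1+s)/2) := by
      have h0 := congrArg (fun y : 𝓞 K => (y:K)) hEq
      simp only [map_add, map_mul, map_intCast, ← RingOfIntegers.coe_eq_algebraMap] at h0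
      rwa [hω] at h0
    by_cases hqq : q = q'
    · subst hqq
      refine ⟨?_, rfl⟩
      have : (p:K) = (p':K) := by linear_combination hK
      exact_mod_cast this
    · exfalso
      apply hsQ (((2*(p'-p) + (q'-q) : ℤ):ℚ)/(((q-q' : ℤ)):ℚ))
      have hne : (((q-q':ℤ)):ℚ) ≠ 0 := by
        simp only [ne_eq, Int.cast_eq_zero, sub_eq_zero]
        exact hqq
      have hneK : ((((q-q':ℤ)):ℚ):K) ≠ 0 := by exact_mod_cast hne
      push_cast
      push_cast at hneK
      rw [div_eq_iff hneK]
      linear_combination (-2:K)*hK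
  -- ω² = ω + m
  have hdm : ((d:ℤ):K) = 4*((m:ℤ):K)+1 := by exact_mod_cast congrArg (fun z : ℤ => (z:K)) hm
  have hω2 : ω^2 = ω + (m : 𝓞 K) := by
    apply RingOfIntegers.ext
    simp only [map_pow, map_add, map_intCast, ← RingOfIntegers.coe_eq_algebraMap]
    rw [hω]
    field_simp
    linear_combination hs + hdm
  -- σ τ on ω
  have happσ : ∀ p q : ℤ, σ ((p:𝓞 K) + (q:𝓞 K)*ω) = (p:𝓞 K) + (q:𝓞 K) * σ ω := by
    intro p q; rw [map_add, map_mul, map_intCast, map_intCast]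
  have happτ : ∀ p q : ℤ, τ ((p:𝓞 K) + (q:𝓞 K)*ω) = (p:𝓞 K) + (q:𝓞 K) * τ ω := by
    intro p q; rw [map_add, map_mul, map_intCast, map_intCast]
  have hστω : σ ω ≠ τ ω := by
    intro hEq
    apply hστ
    ext x
    obtain ⟨a, b, rfl⟩ := decomp x
    rw [happσ, happτ, hEq]
  have hσ2 : (σ ω)^2 = σ ω + (m : 𝓞 K) := by
    have := congrArg σ hω2
    rwa [map_pow, map_add, map_intCast] at this
  have hτ2 : (τ ω)^2 = τ ω + (m : 𝓞 K) := by
    have := congrArg τ hω2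
    rwa [map_pow, map_add, map_intCast] at this
  have hsum : σ ω + τ ω = 1 := by
    have hfac : (σ ω - τ ω) * (σ ω + τ ω - 1) = 0 := by linear_combination hσ2 - hτ2
    rcases mul_eq_zero.mp hfac with h | h
    · exact absurd (sub_eq_zero.mp h) hστω
    · linear_combination h
  have hprod : σ ω * τ ω = -(m : 𝓞 K) := by linear_combination (σ ω)*hsum - hσ2
  set t : 𝓞 K := τ ω - σ ω with htdef
  have h1 : t^2 = 4*(m:𝓞 K)+1 := by
    rw [htdef]
    linear_combination (σ ω + τ ω + 1)*hsum - 4*hprod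
  have h2 : (2*ω-1)^2 = 4*(m:𝓞 K)+1 := by linear_combination 4*hω2
  have hts : t = 2*ω-1 ∨ t = -(2*ω-1) := by
    have hfac : (t - (2*ω-1)) * (t + (2*ω-1)) = 0 := by linear_combination h1 - h2
    rcases mul_eq_zero.mp hfac with h | h
    · exact Or.inl (sub_eq_zero.mp h)
    · exact Or.inr (by linear_combination h)
  -- D basics
  have hD1 : D 1 = 0 := by
    have h := hD 1 1
    simp only [mul_one, one_mul, map_one] at h
    have h2 : D 1 + D 1 = D 1 + 0 := by rw [add_zero]; exact h.symm
    exact add_left_cancel h2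
  have hDval : ∀ p q : ℤ, D ((p:𝓞 K) + (q:𝓞 K)*ω) = (q:𝓞 K) * D ω := by
    intro p q
    have hrw : ((p:𝓞 K) + (q:𝓞 K)*ω) = p • (1:𝓞 K) + q • ω := by
      simp [zsmul_eq_mul]
    rw [hrw, map_add, map_zsmul, map_zsmul, hD1, smul_zero, zero_add, zsmul_eq_mul]
  have hTS : ∀ p q : ℤ, τ ((p:𝓞 K) + (q:𝓞 K)*ω) - σ ((p:𝓞 K) + (q:𝓞 K)*ω) = (q:𝓞 K) * t := by
    intro p q
    rw [happσ, happτ, htdef]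
    ring
  -- the multiplication identity
  have hcomp : ∀ a b : ℤ, ((a:𝓞 K)+(b:𝓞 K)*ω)*(2*ω-1)
      = ((-a+2*b*m : ℤ):𝓞 K) + ((2*a+b : ℤ):𝓞 K)*ω := by
    intro a b
    push_cast
    linear_combination (2*(b:𝓞 K))*hω2
  constructor
  · rintro ⟨β, hβ⟩
    have hβω : D ω = β * t := hβ ω
    obtain ⟨a, b, hab⟩ := decomp β
    have he2 : (d-1)/2 = 2*m := by omega
    rcases hts with ht | ht
    · have hDω : D ω = ((-a+2*b*m : ℤ):𝓞 K) + ((2*a+b : ℤ):𝓞 K)*ω := by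
        rw [hβω, hab, ht, hcomp]
      obtain ⟨hc0, hc1⟩ := uniq c₀ c₁ _ _ (hc.symm.trans hDω)
      constructor
      · exact ⟨a, by rw [he2, hm]; linear_combination -hc0 + 2*m*hc1⟩
      · exact ⟨b, by rw [hm]; linear_combination 2*hc0 + hc1⟩
    · have hDω : D ω = ((-(-a)+2*(-b)*m : ℤ):𝓞 K) + ((2*(-a)+(-b) : ℤ):𝓞 K)*ω := by
        rw [hβω, hab, ht, ← hcomp (-a) (-b)]
        push_cast
        ring
      obtain ⟨hc0, hc1⟩ := uniq c₀ c₁ _ _ (hc.symm.trans hDω)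
      constructor
      · exact ⟨-a, by rw [he2, hm]; linear_combination -hc0 + 2*m*hc1⟩
      · exact ⟨-b, by rw [hm]; linear_combination 2*hc0 + hc1⟩
  · rintro ⟨_, ⟨k, hk⟩⟩
    have heven : Even (c₁ - k) := by
      have hmul : d * (c₁ - k) = c₁*(d-1) - 2*c₀ := by linear_combination hk
      have hev : Even (d * (c₁ - k)) := by
        rw [hmul]
        exact ⟨c₁*2*m - c₀, by rw [hm]; ring⟩
      rcases Int.even_mul.mp hev with h | h
      · exfalso; rw [Int.even_iff] at h; omega
      · exact h
    obtain ⟨a, ha⟩ := heven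
    have hc1' : 2*a + k = c₁ := by omega
    have hc0' : -a + 2*k*m = c₀ := by
      have hdk : (4*m+1)*k = 2*c₀+c₁ := by rw [← hm]; exact hk.symm
      have h2 : 2*(-a + 2*k*m) = 2*c₀ := by linear_combination ha + hdk
      omega
    have hkey : ((a:𝓞 K)+(k:𝓞 K)*ω)*(2*ω-1) = D ω := by
      rw [hcomp, hc, hc0', hc1']
    rcases hts with ht | ht
    · refine ⟨(a:𝓞 K)+(k:𝓞 K)*ω, ?_⟩
      intro x
      obtain ⟨p, q, rfl⟩ := decomp x
      rw [hDval, hTS, ht, ← hkey]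
      ring
    · refine ⟨-((a:𝓞 K)+(k:𝓞 K)*ω), ?_⟩
      intro x
      obtain ⟨p, q, rfl⟩ := decomp x
      rw [hDval, hTS, ht, ← hkey]
      ring
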